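/- Let q be a prime power, m ≥ 1, and 1 ≤ l ≤ m-1. Let M_{m,l} denote the set of all squarefree monomials of degree l in variables y_1,...,y_m, let σ_l denote the l-th elementary symmetric polynomial in y_1,...,y_m, and let E_q = {y_1^q - y_1, ..., y_m^q - y_m}. Then every monomial in M_{m,l} belongs to the ideal of F_q[y_1,...,y_m] generated by M_{m,l+1} ∪ {σ_l} ∪ E_q. -/

import Mathlib

open MvPolynomial

/-- The set of field equations `y_i^q - y_i`. -/
def fieldEqs (F : Type) [Field F] [Fintype F] (m : ℕ) : Set (MvPolynomial (Fin m) F) :=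
  {p | ∃ i : Fin m, p = X i ^ Fintype.card F - X i}

/-- The set of squarefree monomials of degree `t` in `m` variables. -/
def sqfMonomials (F : Type) [Field F] [Fintype F] (m t : ℕ) : Set (MvPolynomial (Fin m) F) :=
  {p | ∃ s : Finset (Fin m), s.card = t ∧ p = ∏ i ∈ s, X i}

theorem stmt0 (F : Type) [Field F] [Fintype F] (m l : ℕ) (hm : 1 ≤ m)
    (hl1 : 1 ≤ l) (hl2 : l ≤ m - 1) :
    ∀ p ∈ sqfMonomials F m l,
      p ∈ Ideal.span (sqfMonomials F m (l + 1) ∪ {esymm (Fin m) F l} ∪ fieldEqs F m) := by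
  intro p hp
  obtain ⟨s, hs, rfl⟩ := hp
  set q := Fintype.card F with hqdef
  have hq : 2 ≤ q := Fintype.one_lt_card
  set I := Ideal.span (sqfMonomials F m (l + 1) ∪ {esymm (Fin m) F l} ∪ fieldEqs F m) with hI
  have hfe : ∀ i : Fin m, (X i ^ q - X i : MvPolynomial (Fin m) F) ∈ I := fun i =>
    Ideal.subset_span (Or.inr ⟨i, rfl⟩)
  have hsqf : ∀ u : Finset (Fin m), u.card = l + 1 →
      (∏ i ∈ u, X i : MvPolynomial (Fin m) F) ∈ I :=
    fun u hu => Ideal.subset_span (Or.inl (Or.inl ⟨u, hu, rfl⟩))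
  have hesymm : esymm (Fin m) F l ∈ I := Ideal.subset_span (Or.inl (Or.inr rfl))
  -- products of field equations
  have hA : ∀ u : Finset (Fin m),
      (∏ i ∈ u, X i ^ q) - (∏ i ∈ u, X i : MvPolynomial (Fin m) F) ∈ I := by
    intro u
    induction u using Finset.induction with
    | empty => simp
    | insert a u' ha ih =>
      rw [Finset.prod_insert ha, Finset.prod_insert ha]
      have heq : X a ^ q * ∏ i ∈ u', X i ^ q - X a * ∏ i ∈ u', (X i : MvPolynomial (Fin m) F)
          = (X a ^ q - X a) * ∏ i ∈ u', X i ^ q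
            + X a * ((∏ i ∈ u', X i ^ q) - ∏ i ∈ u', X i) := by ring
      rw [heq]
      exact add_mem (Ideal.mul_mem_right _ _ (hfe a)) (Ideal.mul_mem_left _ _ ih)
  -- off-diagonal terms
  have hterm : ∀ t ∈ Finset.univ.powersetCard l, t ≠ s →
      (∏ i ∈ t, X i) * (∏ i ∈ s, (X i : MvPolynomial (Fin m) F) ^ (q - 1)) ∈ I := by
    intro t ht hts
    rw [Finset.mem_powersetCard] at ht
    have hnsub : ¬ s ⊆ t := by
      intro hsub
      exact hts (Finset.eq_of_subset_of_card_le hsub (by omega)).symm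
    obtain ⟨j, hjs, hjt⟩ := Finset.not_subset.mp hnsub
    obtain ⟨k, hk⟩ : ∃ k, q = k + 2 := ⟨q - 2, by omega⟩
    have heq : (∏ i ∈ t, X i) * (∏ i ∈ s, (X i : MvPolynomial (Fin m) F) ^ (q - 1))
        = (∏ i ∈ insert j t, X i) * (X j ^ k * ∏ i ∈ s.erase j, X i ^ (q - 1)) := by
      rw [Finset.prod_insert hjt, ← Finset.mul_prod_erase s _ hjs]
      have : (q : ℕ) - 1 = k + 1 := by omega
      rw [this, pow_succ]
      ring
    rw [heq]
    exact Ideal.mul_mem_right _ _ (hsqf _ (by rw [Finset.card_insert_of_notMem hjt, ht.2]))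
  have hsmem : s ∈ Finset.univ.powersetCard l :=
    Finset.mem_powersetCard.mpr ⟨Finset.subset_univ s, hs⟩
  have hdiag : (∏ i ∈ s, X i) * (∏ i ∈ s, (X i : MvPolynomial (Fin m) F) ^ (q - 1))
      = ∏ i ∈ s, X i ^ q := by
    rw [← Finset.prod_mul_distrib]
    refine Finset.prod_congr rfl fun i _ => ?_
    rw [← pow_succ']
    congr 1
    omega
  have key : (∏ i ∈ s, (X i : MvPolynomial (Fin m) F))
      = esymm (Fin m) F l * (∏ i ∈ s, X i ^ (q - 1))
        - (∑ t ∈ (Finset.univ.powersetCard l).erase s,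
            (∏ i ∈ t, X i) * (∏ i ∈ s, X i ^ (q - 1)))
        - ((∏ i ∈ s, X i ^ q) - ∏ i ∈ s, X i) := by
    rw [esymm, Finset.sum_mul, ← Finset.add_sum_erase _ _ hsmem, hdiag]
    ring
  rw [key]
  refine sub_mem (sub_mem (Ideal.mul_mem_right _ _ hesymm) ?_) (hA s)
  exact Ideal.sum_mem _ fun t ht =>
    hterm t (Finset.mem_of_mem_erase ht) (Finset.ne_of_mem_erase ht)
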